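/- For any permutations ρ, π, φ of {1,…,n}, the piecewise linear path that goes in a straight line from p(ρ, φ) to p(π, φ) and then in a straight line from p(π, φ) to p(id, φ) lies in OC_n and is homotopic, relative to endpoints and through paths in OC_n, to the straight-line path from p(ρ, φ) to p(id, φ). -/
import Mathlib


/-- The ordered configuration space of `n` points in `ℂ`. -/
def OC (n : ℕ) : Set (Fin n → ℂ) := {z | Function.Injective z}

/-- The permutation point `p(π, φ)`: `k`-th coordinate is `π(k) + φ(k)·i`,
where `π(k), φ(k)` take values in `{1, …, n}`. -/
noncomputable def permPoint {n : ℕ} (π φ : Equiv.Perm (Fin n)) : Fin n → ℂ :=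
  fun k => (((π k : ℕ) + 1 : ℝ) : ℂ) + (((φ k : ℕ) + 1 : ℝ) : ℂ) * Complex.I

/-- Straight-line segment from `a` to `b`, parametrized on `[0,1]`. -/
noncomputable def seg {n : ℕ} (a b : Fin n → ℂ) (t : ℝ) : Fin n → ℂ :=
  fun k => ((1 - t : ℝ) : ℂ) * a k + (t : ℂ) * b k

/-- The piecewise linear path `a → b → c`, parametrized on `[0,1]`. -/
noncomputable def pwPath {n : ℕ} (a b c : Fin n → ℂ) (t : ℝ) : Fin n → ℂ :=
  if t ≤ 1/2 then seg a b (2 * t) else seg b c (2 * t - 1)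

lemma permPoint_im {n : ℕ} (π φ : Equiv.Perm (Fin n)) (k : Fin n) :
    (permPoint π φ k).im = (φ k : ℕ) + 1 := by
  simp [permPoint]

lemma seg_im {n : ℕ} {a b : Fin n → ℂ} {c : Fin n → ℝ}
    (ha : ∀ k, (a k).im = c k) (hb : ∀ k, (b k).im = c k) (t : ℝ) (k : Fin n) :
    (seg a b t k).im = c k := by
  simp only [seg, Complex.add_im, Complex.mul_im, Complex.ofReal_re, Complex.ofReal_im,
    ha, hb]
  ring

lemma pwPath_im {n : ℕ} {a b c : Fin n → ℂ} {f : Fin n → ℝ}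
    (ha : ∀ k, (a k).im = f k) (hb : ∀ k, (b k).im = f k) (hc : ∀ k, (c k).im = f k)
    (t : ℝ) (k : Fin n) : (pwPath a b c t k).im = f k := by
  unfold pwPath
  split
  · exact seg_im ha hb _ k
  · exact seg_im hb hc _ k

lemma inj_of_im {n : ℕ} (φ : Equiv.Perm (Fin n)) {z : Fin n → ℂ}
    (h : ∀ k, (z k).im = (φ k : ℕ) + 1) : Function.Injective z := by
  intro k j hkj
  have : ((φ k : ℕ) : ℝ) + 1 = ((φ j : ℕ) : ℝ) + 1 := by
    rw [← h k, ← h j, hkj]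
  have hnat : (φ k : ℕ) = (φ j : ℕ) := by exact_mod_cast add_right_cancel this
  exact φ.injective (Fin.val_injective hnat)

lemma seg_cont {n : ℕ} (a b : Fin n → ℂ) (k : Fin n) :
    Continuous fun t : ℝ => seg a b t k := by
  unfold seg
  fun_prop

lemma pwPath_cont {n : ℕ} (a b c : Fin n → ℂ) (k : Fin n) :
    Continuous fun t : ℝ => pwPath a b c t k := by
  unfold pwPath
  simp only [apply_ite (fun f : Fin n → ℂ => f k)]
  apply Continuous.if_le
  · exact (seg_cont a b k).comp (by fun_prop)
  · exact (seg_cont b c k).comp (by fun_prop)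
  · exact continuous_id
  · exact continuous_const
  · intro x hx
    subst hx
    simp [seg]

theorem pw_homotopic_straight_line {n : ℕ} (ρ π φ : Equiv.Perm (Fin n)) :
    (∀ t ∈ Set.Icc (0:ℝ) 1,
      pwPath (permPoint ρ φ) (permPoint π φ) (permPoint 1 φ) t ∈ OC n) ∧
    (∀ t ∈ Set.Icc (0:ℝ) 1, seg (permPoint ρ φ) (permPoint 1 φ) t ∈ OC n) ∧
    ∃ H : ℝ → ℝ → (Fin n → ℂ),
      ContinuousOn (fun p : ℝ × ℝ => H p.1 p.2)
        (Set.Icc (0:ℝ) 1 ×ˢ Set.Icc (0:ℝ) 1) ∧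
      (∀ s ∈ Set.Icc (0:ℝ) 1, ∀ t ∈ Set.Icc (0:ℝ) 1, H s t ∈ OC n) ∧
      (∀ t ∈ Set.Icc (0:ℝ) 1,
        H 0 t = pwPath (permPoint ρ φ) (permPoint π φ) (permPoint 1 φ) t) ∧
      (∀ t ∈ Set.Icc (0:ℝ) 1, H 1 t = seg (permPoint ρ φ) (permPoint 1 φ) t) ∧
      (∀ s ∈ Set.Icc (0:ℝ) 1,
        H s 0 = permPoint ρ φ ∧ H s 1 = permPoint 1 φ) := by
  set a := permPoint ρ φ
  set b := permPoint π φ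
  set c := permPoint 1 φ
  have ha : ∀ k, (a k).im = (φ k : ℕ) + 1 := permPoint_im ρ φ
  have hb : ∀ k, (b k).im = (φ k : ℕ) + 1 := permPoint_im π φ
  have hc : ∀ k, (c k).im = (φ k : ℕ) + 1 := permPoint_im 1 φ
  have hpw_im : ∀ t k, (pwPath a b c t k).im = (φ k : ℕ) + 1 :=
    pwPath_im ha hb hc
  have hseg_im : ∀ t k, (seg a c t k).im = (φ k : ℕ) + 1 :=
    fun t k => seg_im ha hc t k
  refine ⟨fun t _ => inj_of_im φ (hpw_im t), fun t _ => inj_of_im φ (hseg_im t), ?_⟩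
  refine ⟨fun s t => fun k => ((1 - s : ℝ) : ℂ) * pwPath a b c t k
      + (s : ℂ) * seg a c t k, ?_, ?_, ?_, ?_, ?_⟩
  · apply Continuous.continuousOn
    apply continuous_pi
    intro k
    have h1 : Continuous fun p : ℝ × ℝ => pwPath a b c p.2 k :=
      (pwPath_cont a b c k).comp continuous_snd
    have h2 : Continuous fun p : ℝ × ℝ => seg a c p.2 k :=
      (seg_cont a c k).comp continuous_snd
    fun_prop
  · intro s _ t _
    apply inj_of_im φ
    intro k
    simp only [Complex.add_im, Complex.mul_im, Complex.ofReal_re, Complex.ofReal_im,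
      hpw_im t k, hseg_im t k]
    ring
  · intro t _
    funext k
    push_cast
    ring
  · intro t _
    funext k
    push_cast
    ring
  · intro s _
    constructor
    · funext k
      have h0 : pwPath a b c 0 k = a k := by
        simp [pwPath, seg]
      have h0' : seg a c 0 k = a k := by simp [seg]
      simp only [h0, h0']
      push_cast
      ring
    · funext k
      have h1 : pwPath a b c 1 k = c k := by
        rw [pwPath, if_neg (by norm_num)]
        simp [seg]
        norm_num
      have h1' : seg a c 1 k = c k := by simp [seg]
      simp only [h1, h1']
      push_cast
      ring
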